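/- arXiv:2102.05731 — 2 statements merged into one kernel-verified Lean document; each statement's English description precedes it below -/
import Mathlib

section
/- For positive integers n, p, q with n ≤ p + q, the ring homomorphism from the polynomial ring ℤ[c_1,...,c_n] to ℤ[h_1,...,h_p, e_1,...,e_q] sending c_k to the sum over i+j=k of h_i·e_j (with h_0 = e_0 = 1, and h_i = 0 for i > p, e_j = 0 for j > q) is injective. -/
open MvPolynomial

/-- The variable `h_i` (for `1 ≤ i ≤ p`), with `h_0 = 1` and `h_i = 0` for `i > p`. -/
noncomputable def Hvar (p q : ℕ) (i : ℕ) : MvPolynomial (Fin p ⊕ Fin q) ℤ :=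
  if i = 0 then 1 else if h : i - 1 < p then X (Sum.inl ⟨i - 1, h⟩) else 0

/-- The variable `e_j` (for `1 ≤ j ≤ q`), with `e_0 = 1` and `e_j = 0` for `j > q`. -/
noncomputable def Evar (p q : ℕ) (j : ℕ) : MvPolynomial (Fin p ⊕ Fin q) ℤ :=
  if j = 0 then 1 else if h : j - 1 < q then X (Sum.inr ⟨j - 1, h⟩) else 0

/-- The homomorphism `φ : ℤ[c_1,…,c_n] → ℤ[h_1,…,h_p,e_1,…,e_q]`,
`φ(c_k) = Σ_{i+j=k} h_i e_j`.  Here the variable indexed by `k : Fin n`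
represents `c_{k+1}`. -/
noncomputable def phiHE (n p q : ℕ) :
    MvPolynomial (Fin n) ℤ →ₐ[ℤ] MvPolynomial (Fin p ⊕ Fin q) ℤ :=
  aeval (fun k : Fin n =>
    ∑ i ∈ Finset.range (k.1 + 2), Hvar p q i * Evar p q (k.1 + 1 - i))

lemma Multiset.esymm_eq_zero_of_card_lt {R : Type*} [CommRing R] {s : Multiset R} {k : ℕ}
    (h : Multiset.card s < k) : s.esymm k = 0 := by
  rw [Multiset.esymm, Multiset.powersetCard_eq_empty _ h]
  simp

lemma Multiset.esymm_add {R : Type*} [CommRing R] (s t : Multiset R) (k : ℕ)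
    (hk : k ≤ Multiset.card s + Multiset.card t) :
    (s + t).esymm k =
      ∑ ij ∈ Finset.HasAntidiagonal.antidiagonal k, s.esymm ij.1 * t.esymm ij.2 := by
  classical
  nontriviality R
  have hfd : ((s.map fun r => Polynomial.X + Polynomial.C r).prod).natDegree =
      Multiset.card s := by
    rw [Polynomial.natDegree_multiset_prod_of_monic]
    · simp [Multiset.map_map, Function.comp_def, Polynomial.natDegree_X_add_C, Polynomial.natDegree_X]
    · intro a ha
      simp only [Multiset.mem_map] at ha
      obtain ⟨r, -, rfl⟩ := ha
      exact Polynomial.monic_X_add_C r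
  have hgd : ((t.map fun r => Polynomial.X + Polynomial.C r).prod).natDegree =
      Multiset.card t := by
    rw [Polynomial.natDegree_multiset_prod_of_monic]
    · simp [Multiset.map_map, Function.comp_def, Polynomial.natDegree_X_add_C, Polynomial.natDegree_X]
    · intro a ha
      simp only [Multiset.mem_map] at ha
      obtain ⟨r, -, rfl⟩ := ha
      exact Polynomial.monic_X_add_C r
  have hcard : Multiset.card (s + t) = Multiset.card s + Multiset.card t := by simp
  have key : (s + t).esymm k =
      ((s.map fun r => Polynomial.X + Polynomial.C r).prod *
        (t.map fun r => Polynomial.X + Polynomial.C r).prod).coeff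
        (Multiset.card s + Multiset.card t - k) := by
    have h1 : Multiset.card s + Multiset.card t - k ≤ Multiset.card (s + t) := by omega
    have h2 := Multiset.prod_X_add_C_coeff (s + t) h1
    rw [Multiset.map_add, Multiset.prod_add] at h2
    rw [h2, hcard]
    congr 1
    omega
  rw [key, Polynomial.coeff_mul]
  have step1 : ∑ ab ∈ Finset.HasAntidiagonal.antidiagonal (Multiset.card s + Multiset.card t - k),
      ((s.map fun r => Polynomial.X + Polynomial.C r).prod).coeff ab.1 *
      ((t.map fun r => Polynomial.X + Polynomial.C r).prod).coeff ab.2 =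
      ∑ ab ∈ (Finset.HasAntidiagonal.antidiagonal (Multiset.card s + Multiset.card t - k)).filter
        (fun ab : ℕ × ℕ => ab.1 ≤ Multiset.card s ∧ ab.2 ≤ Multiset.card t),
      ((s.map fun r => Polynomial.X + Polynomial.C r).prod).coeff ab.1 *
      ((t.map fun r => Polynomial.X + Polynomial.C r).prod).coeff ab.2 := by
    symm
    apply Finset.sum_subset (Finset.filter_subset _ _)
    intro ab hab habn
    rw [Finset.HasAntidiagonal.mem_antidiagonal] at hab
    rw [Finset.mem_filter, Finset.HasAntidiagonal.mem_antidiagonal] at habn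
    rcases (by omega : Multiset.card s < ab.1 ∨ Multiset.card t < ab.2) with h' | h'
    · rw [Polynomial.coeff_eq_zero_of_natDegree_lt (hfd.trans_lt h'), zero_mul]
    · rw [Polynomial.coeff_eq_zero_of_natDegree_lt (hgd.trans_lt h'), mul_zero]
  have step2 : ∑ ij ∈ Finset.HasAntidiagonal.antidiagonal k, s.esymm ij.1 * t.esymm ij.2 =
      ∑ ij ∈ (Finset.HasAntidiagonal.antidiagonal k).filter
        (fun ij : ℕ × ℕ => ij.1 ≤ Multiset.card s ∧ ij.2 ≤ Multiset.card t),
        s.esymm ij.1 * t.esymm ij.2 := by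
    symm
    apply Finset.sum_subset (Finset.filter_subset _ _)
    intro ij hij hijn
    rw [Finset.HasAntidiagonal.mem_antidiagonal] at hij
    rw [Finset.mem_filter, Finset.HasAntidiagonal.mem_antidiagonal] at hijn
    rcases (by omega : Multiset.card s < ij.1 ∨ Multiset.card t < ij.2) with h' | h'
    · rw [Multiset.esymm_eq_zero_of_card_lt h', zero_mul]
    · rw [Multiset.esymm_eq_zero_of_card_lt h', mul_zero]
  rw [step1, step2]
  refine Finset.sum_nbij'
    (fun ab => (Multiset.card s - ab.1, Multiset.card t - ab.2))
    (fun ij => (Multiset.card s - ij.1, Multiset.card t - ij.2)) ?_ ?_ ?_ ?_ ?_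
  · intro ab hab
    simp only [Finset.mem_filter, Finset.HasAntidiagonal.mem_antidiagonal] at hab ⊢
    omega
  · intro ij hij
    simp only [Finset.mem_filter, Finset.HasAntidiagonal.mem_antidiagonal] at hij ⊢
    omega
  · rintro ⟨a1, a2⟩ hab
    simp only [Finset.mem_filter, Finset.HasAntidiagonal.mem_antidiagonal] at hab
    simp only [Prod.mk.injEq]
    omega
  · rintro ⟨a1, a2⟩ hij
    simp only [Finset.mem_filter, Finset.HasAntidiagonal.mem_antidiagonal] at hij
    simp only [Prod.mk.injEq]
    omega
  · intro ab hab
    simp only [Finset.mem_filter, Finset.HasAntidiagonal.mem_antidiagonal] at hab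
    rw [Multiset.prod_X_add_C_coeff s (by omega : ab.1 ≤ Multiset.card s),
      Multiset.prod_X_add_C_coeff t (by omega : ab.2 ≤ Multiset.card t)]

lemma esymm_sum_decomp (p q k : ℕ) (hk : k ≤ p + q) :
    esymm (Fin p ⊕ Fin q) ℤ k =
      ∑ i ∈ Finset.range (k + 1),
        rename Sum.inl (esymm (Fin p) ℤ i) * rename Sum.inr (esymm (Fin q) ℤ (k - i)) := by
  have huniv : (Finset.univ : Finset (Fin p ⊕ Fin q)).val =
      (Finset.univ : Finset (Fin p)).val.map Sum.inl +
      (Finset.univ : Finset (Fin q)).val.map Sum.inr := by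
    rw [← Finset.univ_disjSum_univ, Finset.val_disjSum]
    rfl
  have hL : ∀ i : ℕ, rename (R := ℤ) Sum.inl (esymm (Fin p) ℤ i) =
      ((Finset.univ : Finset (Fin p)).val.map
        (X ∘ Sum.inl : Fin p → MvPolynomial (Fin p ⊕ Fin q) ℤ)).esymm i := by
    intro i
    rw [rename_eq_aeval, aeval_esymm_eq_multiset_esymm]
  have hR : ∀ j : ℕ, rename (R := ℤ) Sum.inr (esymm (Fin q) ℤ j) =
      ((Finset.univ : Finset (Fin q)).val.map
        (X ∘ Sum.inr : Fin q → MvPolynomial (Fin p ⊕ Fin q) ℤ)).esymm j := by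
    intro j
    rw [rename_eq_aeval, aeval_esymm_eq_multiset_esymm]
  have hcards : Multiset.card ((Finset.univ : Finset (Fin p)).val.map
      (X ∘ Sum.inl : Fin p → MvPolynomial (Fin p ⊕ Fin q) ℤ)) = p ∧
      Multiset.card ((Finset.univ : Finset (Fin q)).val.map
      (X ∘ Sum.inr : Fin q → MvPolynomial (Fin p ⊕ Fin q) ℤ)) = q := by
    constructor <;> simp
  rw [esymm_eq_multiset_esymm, huniv, Multiset.map_add, Multiset.map_map, Multiset.map_map,
    Multiset.esymm_add _ _ k (by rw [hcards.1, hcards.2]; exact hk),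
    Finset.Nat.sum_antidiagonal_eq_sum_range_succ_mk]
  exact Finset.sum_congr rfl fun i _ => by rw [hL, hR]

lemma esymm_eq_zero_of_card_lt {n : ℕ} {k : ℕ} (h : n < k) :
    esymm (Fin n) ℤ k = 0 := by
  rw [esymm, Finset.powersetCard_eq_empty.2 (by simpa using h)]
  simp

theorem phiHE_injective (n p q : ℕ) (hn : 0 < n) (hp : 0 < p) (hq : 0 < q)
    (h : n ≤ p + q) : Function.Injective (phiHE n p q) := by
  classical
  let ψ : MvPolynomial (Fin p ⊕ Fin q) ℤ →ₐ[ℤ] MvPolynomial (Fin p ⊕ Fin q) ℤ :=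
    aeval (Sum.elim
      (fun i : Fin p => rename Sum.inl (esymm (Fin p) ℤ (i.1 + 1)))
      (fun j : Fin q => rename Sum.inr (esymm (Fin q) ℤ (j.1 + 1))))
  have hH : ∀ i : ℕ, ψ (Hvar p q i) = rename Sum.inl (esymm (Fin p) ℤ i) := by
    intro i
    unfold Hvar
    by_cases h0 : i = 0
    · subst h0
      simp [esymm_zero]
    · rw [if_neg h0]
      by_cases h1 : i - 1 < p
      · rw [dif_pos h1]
        show (aeval _) (X _) = _
        rw [aeval_X]
        simp only [Sum.elim_inl]
        have hi : i - 1 + 1 = i := by omega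
        rw [hi]
      · rw [dif_neg h1, map_zero, esymm_eq_zero_of_card_lt (show p < i by omega), map_zero]
  have hE : ∀ j : ℕ, ψ (Evar p q j) = rename Sum.inr (esymm (Fin q) ℤ j) := by
    intro j
    unfold Evar
    by_cases h0 : j = 0
    · subst h0
      simp [esymm_zero]
    · rw [if_neg h0]
      by_cases h1 : j - 1 < q
      · rw [dif_pos h1]
        show (aeval _) (X _) = _
        rw [aeval_X]
        simp only [Sum.elim_inr]
        have hj : j - 1 + 1 = j := by omega
        rw [hj]
      · rw [dif_neg h1, map_zero, esymm_eq_zero_of_card_lt (show q < j by omega), map_zero]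
  have key : ∀ x, ψ (phiHE n p q x) =
      aeval (fun k : Fin n => esymm (Fin p ⊕ Fin q) ℤ (k.1 + 1)) x := by
    intro x
    rw [← AlgHom.comp_apply]
    congr 1
    apply MvPolynomial.algHom_ext
    intro k
    rw [AlgHom.comp_apply, phiHE, aeval_X, aeval_X, map_sum]
    rw [esymm_sum_decomp p q (k.1 + 1) (by omega)]
    refine Finset.sum_congr rfl fun i _ => ?_
    rw [map_mul, hH, hE]
  have hinj : Function.Injective
      (aeval (R := ℤ) (fun k : Fin n => esymm (Fin p ⊕ Fin q) ℤ (k.1 + 1))) := by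
    have hcard : n ≤ Fintype.card (Fin p ⊕ Fin q) := by
      simp only [Fintype.card_sum, Fintype.card_fin]
      omega
    have h2 := esymmAlgHom_injective (σ := Fin p ⊕ Fin q) (R := ℤ) (n := n) hcard
    intro a b hab
    apply h2
    apply Subtype.val_injective
    rw [esymmAlgHom_apply, esymmAlgHom_apply]
    exact hab
  intro a b hab
  apply hinj
  rw [← key a, ← key b, hab]
end

section
/- For a partition λ with conjugate λ', the involution ω of Λ = ℤ[c_1,c_2,...] defined by ω(c) = 1/c(-t) satisfies ω(S_λ(c)) = S_{λ'}(c), where S_λ(c) = det(c_{λ_i + j - i}) is the Schur determinant. -/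
open MvPolynomial

/-- `Λ = ℤ[c_1, c_2, …]`; the variable of index `k : ℕ` represents `c_{k+1}`. -/
abbrev Lam : Type := MvPolynomial ℕ ℤ

/-- `c_k` for `k : ℤ`, with `c_0 = 1` and `c_k = 0` for `k < 0`. -/
noncomputable def cInt (k : ℤ) : Lam :=
  if k < 0 then 0 else if k = 0 then 1 else X (k.toNat - 1)

/-- The series `c(t) = 1 + c_1 t + c_2 t² + ⋯`. -/
noncomputable def cSeries : PowerSeries Lam :=
  PowerSeries.mk fun k => if k = 0 then 1 else X (k - 1)

/-- `ω(c)_k` : the coefficient of `t^k` in `1/c(-t)`. -/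
noncomputable def omegaC (k : ℕ) : Lam :=
  PowerSeries.coeff (R := Lam) (k + 1) ((PowerSeries.rescale (-1) cSeries).invOfUnit 1)

/-- The ℤ-algebra involution `ω` of `Λ`, sending `c(t)` to `1/c(-t)`. -/
noncomputable def omegaHom : Lam →ₐ[ℤ] Lam := aeval omegaC

/-- The Schur determinant `S_λ(c) = det(c_{λ_i + j - i})_{1 ≤ i,j ≤ n}`. -/
noncomputable def SchurDet (n : ℕ) (l : Fin n → ℕ) : Lam :=
  Matrix.det (fun i j : Fin n => cInt ((l i : ℤ) + (j : ℤ) - (i : ℤ)))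

/- ============ Auxiliary development ============ -/

noncomputable section OmegaSchurAux

open Finset Matrix Equiv

/-- The series `1/c(-t)`. -/
def dSeries : PowerSeries Lam := (PowerSeries.rescale (-1) cSeries).invOfUnit 1

/-- `e_k` for `k : ℤ`, the coefficients of `1/c(-t)`. -/
def eInt (k : ℤ) : Lam := if k < 0 then 0 else PowerSeries.coeff (R := Lam) k.toNat dSeries

lemma cInt_of_neg {k : ℤ} (h : k < 0) : cInt k = 0 := if_pos h

lemma eInt_of_neg {k : ℤ} (h : k < 0) : eInt k = 0 := if_pos h

lemma cInt_zero : cInt 0 = 1 := rfl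

lemma cSeries_coeff (k : ℕ) : PowerSeries.coeff (R := Lam) k cSeries = cInt (k : ℤ) := by
  rw [cSeries, PowerSeries.coeff_mk, cInt]
  rcases Nat.eq_zero_or_pos k with h | h
  · subst h; simp
  · rw [if_neg (Nat.pos_iff_ne_zero.mp h), if_neg (show ¬((k : ℤ) < 0) by omega),
      if_neg (show ¬((k : ℤ) = 0) by omega), Int.toNat_natCast]

lemma rescale_mul_dSeries : (PowerSeries.rescale (-1) cSeries) * dSeries = 1 := by
  apply PowerSeries.mul_invOfUnit
  rw [← PowerSeries.coeff_zero_eq_constantCoeff_apply, PowerSeries.coeff_rescale]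
  simp [cSeries]

lemma eInt_zero : eInt 0 = 1 := by
  rw [eInt, if_neg (by omega)]
  simpa [dSeries, PowerSeries.coeff_zero_eq_constantCoeff] using
    PowerSeries.constantCoeff_invOfUnit (PowerSeries.rescale (-1) cSeries) 1

lemma neg_one_pow_mod2 (a b : ℕ) (h : a % 2 = b % 2) : (-1 : Lam) ^ a = (-1) ^ b := by
  conv_lhs => rw [← Nat.div_add_mod a 2]
  conv_rhs => rw [← Nat.div_add_mod b 2]
  rw [h, pow_add, pow_add, pow_mul, pow_mul, neg_one_sq, one_pow, one_pow]

/-- The key relation: coefficients of `c(-t) · e(t) = 1`. -/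
lemma key_rel (k : ℕ) :
    ∑ j ∈ range (k + 1), (-1 : Lam) ^ j * cInt (j : ℤ) * eInt ((k : ℤ) - j) =
      if k = 0 then 1 else 0 := by
  have h := congrArg (PowerSeries.coeff (R := Lam) k) rescale_mul_dSeries
  rw [PowerSeries.coeff_mul, Finset.Nat.sum_antidiagonal_eq_sum_range_succ_mk] at h
  rw [PowerSeries.coeff_one] at h
  rw [← h]
  apply Finset.sum_congr rfl
  intro j hj
  rw [Finset.mem_range] at hj
  rw [PowerSeries.coeff_rescale, cSeries_coeff]
  have hcast : (k : ℤ) - j = ((k - j : ℕ) : ℤ) := by omega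
  have heq : eInt ((k : ℤ) - j) = PowerSeries.coeff (R := Lam) (k - j) dSeries := by
    rw [hcast, eInt, if_neg (by omega), Int.toNat_natCast]
  rw [heq]

variable {N : ℕ}

/-- The big lower-triangular matrix with entries `e_{p-q}`. -/
def Emat (N : ℕ) : Matrix (Fin N) (Fin N) Lam := fun p q => eInt ((p : ℤ) - q)

/-- The big lower-triangular matrix with entries `(-1)^{p+q} c_{p-q}`. -/
def Cmat (N : ℕ) : Matrix (Fin N) (Fin N) Lam :=
  fun p q => (-1) ^ (p.1 + q.1) * cInt ((p : ℤ) - q)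

lemma Emat_mul_Cmat (N : ℕ) : Emat N * Cmat N = 1 := by
  rw [← Matrix.ext_iff]
  intro p q
  rw [Matrix.mul_apply]
  rcases lt_or_ge p.1 q.1 with hpq | hpq
  · rw [Matrix.one_apply_ne (by intro h; rw [h] at hpq; omega)]
    apply Finset.sum_eq_zero
    intro s _
    rcases lt_or_ge s.1 q.1 with hs | hs
    · rw [Cmat, cInt_of_neg (by push_cast; omega)]
      simp
    · rw [Emat, eInt_of_neg (by push_cast; omega)]
      simp
  · set F : ℕ → Lam := fun t => eInt ((p : ℤ) - t) * ((-1 : Lam) ^ (t + q.1) * cInt ((t : ℤ) - q.1))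
      with hF
    have hsum : ∀ s : Fin N, Emat N p s * Cmat N s q = F s.1 := by
      intro s; rw [hF, Emat, Cmat]
    rw [Finset.sum_congr rfl (fun s _ => hsum s), Fin.sum_univ_eq_sum_range F N]
    have hzero : ∀ t, t < q.1 ∨ p.1 < t → F t = 0 := by
      intro t ht
      rcases ht with ht | ht
      · rw [hF]; simp only; rw [cInt_of_neg (by push_cast; omega), mul_zero, mul_zero]
      · rw [hF]; simp only; rw [eInt_of_neg (by push_cast; omega), zero_mul]
    have hsub : ∑ t ∈ range N, F t = ∑ t ∈ Finset.Ico q.1 (p.1 + 1), F t := by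
      apply (Finset.sum_subset ?_ ?_).symm
      · intro t ht; rw [Finset.mem_Ico] at ht; rw [Finset.mem_range]; omega
      · intro t _ ht; rw [Finset.mem_Ico] at ht; exact hzero t (by omega)
    rw [hsub, Finset.sum_Ico_eq_sum_range]
    have hk : p.1 + 1 - q.1 = (p.1 - q.1) + 1 := by omega
    rw [hk]
    have : ∀ j ∈ range ((p.1 - q.1) + 1), F (q.1 + j) =
        (-1 : Lam) ^ j * cInt (j : ℤ) * eInt (((p.1 - q.1 : ℕ) : ℤ) - j) := by
      intro j hj
      rw [Finset.mem_range] at hj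
      rw [hF]; simp only
      rw [neg_one_pow_mod2 (q.1 + j + q.1) j (by omega)]
      have h1 : ((q.1 + j : ℕ) : ℤ) - q.1 = (j : ℤ) := by push_cast; ring
      have h2 : (p : ℤ) - ((q.1 + j : ℕ) : ℤ) = ((p.1 - q.1 : ℕ) : ℤ) - j := by
        push_cast; omega
      rw [h1, h2]
      ring
    rw [Finset.sum_congr rfl this, key_rel]
    rw [Matrix.one_apply]
    by_cases h : p = q
    · rw [if_pos h, if_pos (by rw [h]; omega)]
    · rw [if_neg h, if_neg (by rw [Fin.ext_iff] at h; omega)]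

lemma Emat_det (N : ℕ) : (Emat N).det = 1 := by
  rw [Matrix.det_of_lowerTriangular (Emat N)
    (by intro i j hij; exact eInt_of_neg (by simp at hij; push_cast; omega))]
  apply Finset.prod_eq_one
  intro i _
  show eInt ((i : ℤ) - i) = 1
  rw [sub_self, eInt_zero]

/-- Jacobi's lemma in block form. -/
lemma jacobi_block {α β : Type} [Fintype α] [Fintype β] [DecidableEq α] [DecidableEq β]
    (P Q : Matrix (α ⊕ β) (α ⊕ β) Lam) (h : P * Q = 1) :
    (P.toBlocks₁₁).det = P.det * (Q.toBlocks₂₂).det := by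
  have h1 : fromBlocks (P.toBlocks₁₁ * Q.toBlocks₁₁ + P.toBlocks₁₂ * Q.toBlocks₂₁)
      (P.toBlocks₁₁ * Q.toBlocks₁₂ + P.toBlocks₁₂ * Q.toBlocks₂₂)
      (P.toBlocks₂₁ * Q.toBlocks₁₁ + P.toBlocks₂₂ * Q.toBlocks₂₁)
      (P.toBlocks₂₁ * Q.toBlocks₁₂ + P.toBlocks₂₂ * Q.toBlocks₂₂) = fromBlocks 1 0 0 1 := by
    rw [← Matrix.fromBlocks_multiply, Matrix.fromBlocks_toBlocks, Matrix.fromBlocks_toBlocks,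
      h, Matrix.fromBlocks_one]
  rw [Matrix.fromBlocks_inj] at h1
  obtain ⟨-, h12, -, h22⟩ := h1
  have h2 : P * fromBlocks 1 Q.toBlocks₁₂ 0 Q.toBlocks₂₂ =
      fromBlocks P.toBlocks₁₁ 0 P.toBlocks₂₁ 1 := by
    conv_lhs => rw [← Matrix.fromBlocks_toBlocks P]
    rw [Matrix.fromBlocks_multiply]
    rw [Matrix.mul_one, Matrix.mul_zero, add_zero, Matrix.mul_one, Matrix.mul_zero, add_zero,
      h12, h22]
  have h3 := congrArg Matrix.det h2
  rw [Matrix.det_mul, Matrix.det_fromBlocks_zero₂₁, Matrix.det_fromBlocks_zero₁₂] at h3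
  simp only [Matrix.det_one, one_mul, mul_one] at h3
  rw [h3]

/- ============ Combinatorics of the conjugate partition ============ -/

variable {n m : ℕ}

/-- The conjugate partition. -/
def conjP (l : Fin n → ℕ) (b : Fin m) : ℕ :=
  ((Finset.univ : Finset (Fin n)).filter fun i => b.1 + 1 ≤ l i).card

lemma conjP_le (l : Fin n → ℕ) (b : Fin m) : conjP l b ≤ n :=
  le_trans (Finset.card_filter_le _ _) (by simp)

/-- The row/column selection function. -/
def rfn (l : Fin n → ℕ) (hm : ∀ i, l i ≤ m) : Fin n ⊕ Fin m → Fin (n + m) :=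
  Sum.elim (fun i => ⟨l i + (n - 1 - i.1), by have := hm i; have := i.2; omega⟩)
    (fun b => ⟨n + b.1 - conjP l b, by have := conjP_le l b; have := b.2; omega⟩)

lemma conjP_ge (l : Fin n → ℕ) (hl : Antitone l) (b : Fin m) (i : Fin n)
    (h : b.1 + 1 ≤ l i) : i.1 + 1 ≤ conjP l b := by
  have hsub : Finset.Iic i ⊆ (Finset.univ : Finset (Fin n)).filter fun i' => b.1 + 1 ≤ l i' := by
    intro i' hi'
    rw [Finset.mem_Iic] at hi'
    rw [Finset.mem_filter]
    exact ⟨Finset.mem_univ _, le_trans h (hl hi')⟩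
  have := Finset.card_le_card hsub
  rwa [Fin.card_Iic] at this

lemma conjP_lt (l : Fin n → ℕ) (hl : Antitone l) (b : Fin m) (i : Fin n)
    (h : l i ≤ b.1) : conjP l b ≤ i.1 := by
  have hsub : ((Finset.univ : Finset (Fin n)).filter fun i' => b.1 + 1 ≤ l i') ⊆
      Finset.Iio i := by
    intro i' hi'
    rw [Finset.mem_filter] at hi'
    rw [Finset.mem_Iio]
    by_contra hc
    push_neg at hc
    have := hl hc
    omega
  have := Finset.card_le_card hsub
  rwa [Fin.card_Iio] at this

lemma rfn_inj (l : Fin n → ℕ) (hl : Antitone l) (hm : ∀ i, l i ≤ m) :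
    Function.Injective (rfn l hm) := by
  rintro (i | b) (i' | b') h <;> rw [rfn] at h <;>
    simp only [Sum.elim_inl, Sum.elim_inr, Fin.mk.injEq] at h
  · rcases lt_trichotomy i i' with hlt | heq | hlt
    · have h1 := hl hlt.le
      have h2 : i.1 < i'.1 := hlt
      have := i'.2; omega
    · rw [heq]
    · have h1 := hl hlt.le
      have h2 : i'.1 < i.1 := hlt
      have := i.2; omega
  · exfalso
    have hc := conjP_le l b'
    rcases le_or_gt (b'.1 + 1) (l i) with hcase | hcase
    · have := conjP_ge l hl b' i hcase
      have := i.2; have := b'.2; have := hm i; omega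
    · have := conjP_lt l hl b' i (by omega)
      have := i.2; have := b'.2; have := hm i; omega
  · exfalso
    have hc := conjP_le l b
    rcases le_or_gt (b.1 + 1) (l i') with hcase | hcase
    · have := conjP_ge l hl b i' hcase
      have := i'.2; have := b.2; have := hm i'; omega
    · have := conjP_lt l hl b i' (by omega)
      have := i'.2; have := b.2; have := hm i'; omega
  · have hmono : ∀ b₁ b₂ : Fin m, b₁.1 ≤ b₂.1 → conjP l b₂ ≤ conjP l b₁ := by
      intro b₁ b₂ hb
      apply Finset.card_le_card
      intro i hi
      rw [Finset.mem_filter] at hi ⊢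
      exact ⟨hi.1, by omega⟩
    rcases lt_trichotomy b b' with hlt | heq | hlt
    · have h1 := hmono b b' hlt.le
      have h2 : b.1 < b'.1 := hlt
      have := conjP_le l b; omega
    · rw [heq]
    · have h1 := hmono b' b hlt.le
      have h2 : b'.1 < b.1 := hlt
      have := conjP_le l b'; omega

lemma rfn_bij (l : Fin n → ℕ) (hl : Antitone l) (hm : ∀ i, l i ≤ m) :
    Function.Bijective (rfn l hm) := by
  rw [Fintype.bijective_iff_injective_and_card]
  exact ⟨rfn_inj l hl hm, by simp⟩

/-- The row selection equivalence. -/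
def rEquiv (l : Fin n → ℕ) (hl : Antitone l) (hm : ∀ i, l i ≤ m) :
    (Fin n ⊕ Fin m) ≃ Fin (n + m) :=
  Equiv.ofBijective _ (rfn_bij l hl hm)

lemma rEquiv_apply (l : Fin n → ℕ) (hl : Antitone l) (hm : ∀ i, l i ≤ m) (x) :
    rEquiv l hl hm x = rfn l hm x := rfl

lemma zero_antitone : Antitone (fun _ : Fin n => 0) := fun _ _ _ => le_refl _

lemma zero_le_m : ∀ i : Fin n, (fun _ : Fin n => 0) i ≤ m := fun _ => Nat.zero_le _

/-- The column selection equivalence. -/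
def cEquiv (n m : ℕ) : (Fin n ⊕ Fin m) ≃ Fin (n + m) :=
  rEquiv (fun _ => 0) zero_antitone zero_le_m

lemma swap_conj_apply {α β : Type} [DecidableEq α] [DecidableEq β] (e : α ≃ β) (a b : β)
    (x : α) : Equiv.swap a b (e x) = e (Equiv.swap (e.symm a) (e.symm b) x) := by
  by_cases h1 : x = e.symm a
  · rw [h1]; simp
  · by_cases h2 : x = e.symm b
    · rw [h2]; simp
    · rw [Equiv.swap_apply_of_ne_of_ne h1 h2,
        Equiv.swap_apply_of_ne_of_ne (fun h => h1 ((Equiv.eq_symm_apply _).mpr h))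
          (fun h => h2 ((Equiv.eq_symm_apply _).mpr h))]

/-- The sign of the permutation comparing the row selection to the column selection. -/
lemma sign_aux : ∀ (s : ℕ) (l : Fin n → ℕ) (hl : Antitone l) (hm : ∀ i, l i ≤ m),
    (∑ i, l i) = s →
    Equiv.Perm.sign ((cEquiv n m).trans (rEquiv l hl hm).symm) = (-1) ^ s := by
  intro s
  induction s with
  | zero =>
    intro l hl hm hsum
    have hzero : ∀ i, l i = 0 := by
      intro i
      have := Finset.sum_eq_zero_iff.mp hsum
      exact this i (Finset.mem_univ i)
    have : rEquiv l hl hm = cEquiv n m := by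
      apply Equiv.ext
      intro x
      rw [rEquiv_apply, cEquiv, rEquiv_apply]
      rcases x with i | b
      · rw [rfn, rfn]
        simp only [Sum.elim_inl]
        congr 1
        rw [hzero i]
      · rw [rfn, rfn]
        simp only [Sum.elim_inr]
        congr 1
        have : conjP l b = conjP (fun _ : Fin n => 0) b := by
          rw [conjP, conjP]
          congr 1
          apply Finset.filter_congr
          intro i _
          simp [hzero i]
        rw [this]
    rw [this, Equiv.self_trans_symm]
    simp
  | succ s ih =>
    intro l hl hm hsum
    -- find the last nonzero row
    have hne : ((Finset.univ : Finset (Fin n)).filter fun i => 0 < l i).Nonempty := by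
      by_contra hc
      rw [Finset.not_nonempty_iff_eq_empty, Finset.filter_eq_empty_iff] at hc
      have : ∑ i, l i = 0 :=
        Finset.sum_eq_zero (fun i _ => by have := hc (Finset.mem_univ i); omega)
      omega
    obtain ⟨i₀, hi₀pos, hmax, hi₀max⟩ :
        ∃ i₀ : Fin n, 0 < l i₀ ∧ (∀ i : Fin n, i₀ < i → l i = 0) ∧
          (∀ i : Fin n, 0 < l i → i ≤ i₀) := by
      refine ⟨Finset.max' _ hne, ?_, ?_, ?_⟩
      · have := Finset.max'_mem _ hne
        rw [Finset.mem_filter] at this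
        exact this.2
      · intro i hi
        by_contra hc
        have hmem : i ∈ (Finset.univ : Finset (Fin n)).filter fun i => 0 < l i := by
          rw [Finset.mem_filter]; exact ⟨Finset.mem_univ _, by omega⟩
        have := Finset.le_max' _ i hmem
        exact absurd hi (by omega)
      · intro i hi
        exact Finset.le_max' _ i (by rw [Finset.mem_filter]; exact ⟨Finset.mem_univ _, hi⟩)
    obtain ⟨v, hv⟩ : ∃ v, l i₀ = v := ⟨_, rfl⟩
    have hvpos : 0 < v := hv ▸ hi₀pos
    have hvm : v ≤ m := hv ▸ hm i₀
    have hmge1 : 1 ≤ m := by omega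
    have hi₀n : i₀.1 < n := i₀.2
    set l₂ := Function.update l i₀ (v - 1) with hl₂def
    have hl₂i₀ : l₂ i₀ = v - 1 := by rw [hl₂def]; exact Function.update_self i₀ (v - 1) l
    have hl₂ne : ∀ i, i ≠ i₀ → l₂ i = l i := by
      intro i hi; rw [hl₂def]; exact Function.update_of_ne hi _ l
    have hl₂ : Antitone l₂ := by
      intro i j hij
      by_cases hii : i = i₀ <;> by_cases hjj : j = i₀
      · rw [hii, hjj]
      · -- i = i₀, j ≠ i₀, i ≤ j hence i₀ < j, so l j = 0
        rw [hii, hl₂i₀, hl₂ne j hjj]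
        have hlt : i₀ < j := lt_of_le_of_ne (hii ▸ hij) (Ne.symm hjj)
        have := hmax j hlt
        omega
      · -- j = i₀ : goal l₂ i₀ ≤ l₂ i, i.e. v - 1 ≤ l i
        rw [hjj, hl₂i₀, hl₂ne i hii]
        have h3 : l i₀ ≤ l i := hl (hjj ▸ hij)
        omega
      · rw [hl₂ne i hii, hl₂ne j hjj]
        exact hl hij
    have hm₂ : ∀ i, l₂ i ≤ m := by
      intro i
      by_cases hii : i = i₀
      · rw [hii, hl₂i₀]; omega
      · rw [hl₂ne i hii]; exact hm i
    have hsum₂ : ∑ i, l₂ i = s := by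
      rw [hl₂def, Finset.sum_update_of_mem (Finset.mem_univ i₀)]
      have h4 := Finset.sum_eq_add_sum_sdiff_singleton_of_mem (Finset.mem_univ i₀) l
      omega
    -- the distinguished column index
    have hvm' : v - 1 < m := by omega
    set bv : Fin m := ⟨v - 1, hvm'⟩ with hbv
    have hbv1 : bv.1 = v - 1 := rfl
    -- conjP computations
    have hconjA : conjP l bv = i₀.1 + 1 := by
      rw [conjP]
      have hset : ((Finset.univ : Finset (Fin n)).filter fun i => bv.1 + 1 ≤ l i) =
          Finset.Iic i₀ := by
        ext i
        rw [Finset.mem_filter, Finset.mem_Iic]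
        constructor
        · rintro ⟨-, hi⟩
          exact hi₀max i (by omega)
        · intro hi
          have := hl hi
          exact ⟨Finset.mem_univ _, by omega⟩
      rw [hset, Fin.card_Iic]
    have hconjB : conjP l₂ bv = i₀.1 := by
      rw [conjP]
      have hset : ((Finset.univ : Finset (Fin n)).filter fun i => bv.1 + 1 ≤ l₂ i) =
          Finset.Iio i₀ := by
        ext i
        rw [Finset.mem_filter, Finset.mem_Iio]
        constructor
        · rintro ⟨-, hi⟩
          by_cases hii : i = i₀
          · rw [hii, hl₂i₀] at hi; omega
          · rw [hl₂ne i hii] at hi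
            exact lt_of_le_of_ne (hi₀max i (by omega)) hii
        · intro hi
          have hine : i ≠ i₀ := Fin.ne_of_lt hi
          rw [hl₂ne i hine]
          have := hl hi.le
          exact ⟨Finset.mem_univ _, by omega⟩
      rw [hset, Fin.card_Iio]
    have hconjC : ∀ b : Fin m, b.1 ≠ v - 1 → conjP l₂ b = conjP l b := by
      intro b hb
      rw [conjP, conjP]
      congr 1
      apply Finset.filter_congr
      intro i _
      by_cases hii : i = i₀
      · rw [hii, hl₂i₀, hv]
        constructor <;> omega
      · rw [hl₂ne i hii]
    -- the swapped values in Fin (n+m)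
    set a : Fin (n + m) := ⟨v - 1 + (n - 1 - i₀.1), by omega⟩ with ha
    set b' : Fin (n + m) := ⟨v + (n - 1 - i₀.1), by omega⟩ with hb'
    have ha1v : a.1 = v - 1 + (n - 1 - i₀.1) := rfl
    have hb1v : b'.1 = v + (n - 1 - i₀.1) := rfl
    have hab : a ≠ b' := by
      rw [Fin.ne_iff_vne, ha1v, hb1v]
      omega
    have ha2 : rfn l₂ hm₂ (Sum.inl i₀) = a := by
      apply Fin.ext
      show l₂ i₀ + (n - 1 - i₀.1) = a.1
      rw [ha1v, hl₂i₀]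
    have hb2 : rfn l₂ hm₂ (Sum.inr bv) = b' := by
      apply Fin.ext
      show n + bv.1 - conjP l₂ bv = b'.1
      rw [hconjB, hbv1, hb1v]
      omega
    have ha1 : rfn l hm (Sum.inr bv) = a := by
      apply Fin.ext
      show n + bv.1 - conjP l bv = a.1
      rw [hconjA, hbv1, ha1v]
      omega
    have hb1 : rfn l hm (Sum.inl i₀) = b' := by
      apply Fin.ext
      show l i₀ + (n - 1 - i₀.1) = b'.1
      rw [hv, hb1v]
    -- key: rfn l = swap a b' ∘ rfn l₂
    have hkey : ∀ x, rfn l hm x = Equiv.swap a b' (rfn l₂ hm₂ x) := by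
      intro x
      by_cases hx1 : x = Sum.inl i₀
      · rw [hx1, hb1, ha2, Equiv.swap_apply_left]
      · by_cases hx2 : x = Sum.inr bv
        · rw [hx2, ha1, hb2, Equiv.swap_apply_right]
        · have heq : rfn l hm x = rfn l₂ hm₂ x := by
            rcases x with i | b
            · have hii : i ≠ i₀ := fun h => hx1 (by rw [h])
              apply Fin.ext
              show l i + (n - 1 - i.1) = l₂ i + (n - 1 - i.1)
              rw [hl₂ne i hii]
            · have hbb : b ≠ bv := fun h => hx2 (by rw [h])
              apply Fin.ext
              show n + b.1 - conjP l b = n + b.1 - conjP l₂ b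
              rw [hconjC b (fun h => hbb (Fin.ext (h.trans hbv1.symm)))]
          rw [heq]
          rw [Equiv.swap_apply_of_ne_of_ne]
          · rw [← ha2]
            exact fun h => hx1 (rfn_inj l₂ hl₂ hm₂ h)
          · rw [← hb2]
            exact fun h => hx2 (rfn_inj l₂ hl₂ hm₂ h)
    have hEq : rEquiv l hl hm = (rEquiv l₂ hl₂ hm₂).trans (Equiv.swap a b') := by
      apply Equiv.ext
      intro x
      rw [Equiv.trans_apply, rEquiv_apply, rEquiv_apply]
      exact hkey x
    rw [hEq]
    have hdecomp : (cEquiv n m).trans ((rEquiv l₂ hl₂ hm₂).trans (Equiv.swap a b')).symm =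
        (Equiv.swap ((cEquiv n m).symm a) ((cEquiv n m).symm b')).trans
          ((cEquiv n m).trans (rEquiv l₂ hl₂ hm₂).symm) := by
      rw [← Equiv.trans_swap_trans_symm a b' (cEquiv n m)]
      apply Equiv.ext
      intro x
      simp only [Equiv.trans_apply, Equiv.symm_trans_apply, Equiv.symm_swap]
      rw [Equiv.apply_symm_apply]
    rw [hdecomp]
    have hsign : Equiv.Perm.sign
        ((Equiv.swap ((cEquiv n m).symm a) ((cEquiv n m).symm b')).trans
          ((cEquiv n m).trans (rEquiv l₂ hl₂ hm₂).symm)) =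
        Equiv.Perm.sign ((cEquiv n m).trans (rEquiv l₂ hl₂ hm₂).symm) *
          Equiv.Perm.sign (Equiv.swap ((cEquiv n m).symm a) ((cEquiv n m).symm b')) :=
      Equiv.Perm.sign_mul _ _
    rw [hsign, ih l₂ hl₂ hm₂ hsum₂, Equiv.Perm.sign_swap
      (fun h => hab (by simpa using congrArg (cEquiv n m) h))]
    rw [pow_succ]

/- ============ Sum of the conjugate ============ -/

lemma sum_conjP (l : Fin n → ℕ) (hm : ∀ i, l i ≤ m) :
    ∑ b : Fin m, conjP l b = ∑ i, l i := by
  have h1 : ∀ b : Fin m, conjP l b = ∑ i : Fin n, if b.1 + 1 ≤ l i then 1 else 0 := by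
    intro b
    rw [conjP, Finset.card_filter]
  rw [Finset.sum_congr rfl (fun b _ => h1 b), Finset.sum_comm]
  apply Finset.sum_congr rfl
  intro i _
  have h2 : ∀ b : Fin m, (if b.1 + 1 ≤ l i then (1 : ℕ) else 0) =
      (fun t : ℕ => if t + 1 ≤ l i then (1 : ℕ) else 0) b.1 := fun b => rfl
  rw [Finset.sum_congr rfl (fun b _ => h2 b),
    Fin.sum_univ_eq_sum_range (fun t : ℕ => if t + 1 ≤ l i then (1 : ℕ) else 0) m,
    ← Finset.card_filter]
  have : (Finset.range m).filter (fun t => t + 1 ≤ l i) = Finset.range (l i) := by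
    ext t
    rw [Finset.mem_filter, Finset.mem_range, Finset.mem_range]
    have := hm i
    omega
  rw [this, Finset.card_range]

/- ============ ω on cInt ============ -/

lemma omega_cInt (k : ℤ) : omegaHom (cInt k) = eInt k := by
  rcases lt_trichotomy k 0 with h | h | h
  · rw [cInt_of_neg h, eInt_of_neg h, map_zero]
  · rw [h, cInt_zero, eInt_zero, _root_.map_one]
  · rw [cInt, if_neg (by omega), if_neg (by omega)]
    rw [omegaHom, aeval_X]
    rw [eInt, if_neg (by omega), omegaC, dSeries]
    have h4 : k.toNat - 1 + 1 = k.toNat := by omega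
    rw [h4]

end OmegaSchurAux

/- ============ Main theorem ============ -/

/-- `ω(S_λ(c)) = S_{λ'}(c)` where `λ'` is the conjugate partition,
`λ'_j = #{i : λ_i ≥ j}`.  Here `λ` has `n` parts (weakly decreasing, possibly 0),
and the conjugate is recorded with `m` parts where `m ≥ λ_1`. -/
theorem omega_schur (n m : ℕ) (l : Fin n → ℕ) (hl : Antitone l)
    (hm : ∀ i, l i ≤ m) (l' : Fin m → ℕ)
    (hl' : ∀ j : Fin m, l' j = (Finset.univ.filter fun i : Fin n => j.1 + 1 ≤ l i).card) :
    omegaHom (SchurDet n l) = SchurDet m l' := by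
  classical
  have hl'conj : ∀ j : Fin m, l' j = conjP l j := fun j => hl' j
  set rE := rEquiv l hl hm with hrE
  set cE := cEquiv n m with hcE
  set P := (Emat (n + m)).submatrix rE cE with hP
  set Q := (Cmat (n + m)).submatrix cE rE with hQ
  have hPQ : P * Q = 1 := by
    rw [hP, hQ, Matrix.submatrix_mul_equiv, Emat_mul_Cmat, Matrix.submatrix_one_equiv]
  have hJac := jacobi_block P Q hPQ
  -- LHS : omegaHom (SchurDet n l) = det P.toBlocks₁₁
  have hLHS : omegaHom (SchurDet n l) = (P.toBlocks₁₁).det := by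
    rw [SchurDet]
    rw [show (omegaHom (Matrix.det fun i j : Fin n => cInt ((l i : ℤ) + j - i)) : Lam) =
      ((Matrix.of fun i j : Fin n => cInt ((l i : ℤ) + j - i)).map omegaHom).det from
      RingHom.map_det omegaHom.toRingHom _]
    congr 1
    rw [← Matrix.ext_iff]
    intro i j
    rw [Matrix.map_apply, Matrix.of_apply, omega_cInt]
    show eInt ((l i : ℤ) + j - i) = Emat (n + m) (rE (Sum.inl i)) (cE (Sum.inl j))
    have h1 : (rE (Sum.inl i)).1 = l i + (n - 1 - i.1) := rfl
    have h2 : (cE (Sum.inl j)).1 = 0 + (n - 1 - j.1) := rfl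
    have h3 : Emat (n + m) (rE (Sum.inl i)) (cE (Sum.inl j)) =
        eInt (((rE (Sum.inl i)).1 : ℤ) - ((cE (Sum.inl j)).1 : ℤ)) := rfl
    rw [h3, h1, h2]
    congr 1
    have := i.2; have := j.2; have := hm i
    omega
  -- det P = sign
  have hsigma : Equiv.Perm.sign (cE.trans rE.symm) = (-1) ^ (∑ i, l i) :=
    sign_aux (∑ i, l i) l hl hm rfl
  have hdetP : P.det = ((-1 : Lam)) ^ (∑ i, l i) := by
    have hsub : P = ((Emat (n + m)).submatrix rE rE).submatrix id (cE.trans rE.symm) := by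
      rw [hP, ← Matrix.ext_iff]
      intro i j
      simp only [Matrix.submatrix_apply, id_eq, Equiv.trans_apply, Equiv.apply_symm_apply]
    rw [hsub, Matrix.det_permute', Matrix.det_submatrix_equiv_self, Emat_det, mul_one, hsigma]
    push_cast
    rfl
  -- det Q.toBlocks₂₂
  have hcinr : ∀ b : Fin m, (cE (Sum.inr b)).1 = n + b.1 := by
    intro b
    rw [hcE, cEquiv, rEquiv_apply, rfn]
    simp only [Sum.elim_inr]
    have : conjP (fun _ : Fin n => 0) b = 0 := by
      rw [conjP]
      rw [Finset.filter_false_of_mem (fun i _ => by omega), Finset.card_empty]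
    show n + b.1 - conjP (fun _ : Fin n => 0) b = n + b.1
    rw [this]
    omega
  have hrinr : ∀ b : Fin m, (rE (Sum.inr b)).1 = n + b.1 - conjP l b :=
    fun b => rfl
  have hQ22 : Q.toBlocks₂₂ = Matrix.of fun a b : Fin m =>
      (-1 : Lam) ^ (n + a.1) * ((-1 : Lam) ^ (n + b.1 - conjP l b) *
        cInt ((conjP l b : ℤ) + a - b)) := by
    rw [← Matrix.ext_iff]
    intro a b
    show Cmat (n + m) (cE (Sum.inr a)) (rE (Sum.inr b)) = _
    have hCap : Cmat (n + m) (cE (Sum.inr a)) (rE (Sum.inr b)) =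
        (-1 : Lam) ^ ((cE (Sum.inr a)).1 + (rE (Sum.inr b)).1) *
          cInt (((cE (Sum.inr a)).1 : ℤ) - ((rE (Sum.inr b)).1 : ℤ)) := rfl
    rw [hCap, hcinr a, hrinr b, Matrix.of_apply, ← mul_assoc, ← pow_add]
    have hc := conjP_le l b
    have hbm := b.2
    congr 1
    congr 1
    omega
  -- compute det Q.toBlocks₂₂
  have hT : (Matrix.of fun a b : Fin m => cInt ((conjP l b : ℤ) + a - b)) =
      (Matrix.of fun i j : Fin m => cInt ((l' i : ℤ) + j - i)).transpose := by
    rw [← Matrix.ext_iff]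
    intro a b
    rw [Matrix.transpose_apply, Matrix.of_apply, Matrix.of_apply, hl'conj b]
  have hdetQ : Q.toBlocks₂₂.det =
      ((-1 : Lam) ^ (∑ a : Fin m, (n + a.1)) *
        ((-1 : Lam) ^ (∑ b : Fin m, (n + b.1 - conjP l b)) * SchurDet m l')) := by
    rw [hQ22]
    rw [show (Matrix.of fun a b : Fin m =>
        (-1 : Lam) ^ (n + a.1) * ((-1 : Lam) ^ (n + b.1 - conjP l b) *
          cInt ((conjP l b : ℤ) + a - b))) =
      Matrix.of (fun a b : Fin m => (-1 : Lam) ^ (n + a.1) *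
        (Matrix.of fun a b : Fin m => (-1 : Lam) ^ (n + b.1 - conjP l b) *
          (Matrix.of fun a b : Fin m => cInt ((conjP l b : ℤ) + a - b)) a b) a b) from rfl]
    rw [Matrix.det_mul_column (fun a : Fin m => (-1 : Lam) ^ (n + a.1))]
    rw [Matrix.det_mul_row (fun b : Fin m => (-1 : Lam) ^ (n + b.1 - conjP l b))]
    rw [hT, Matrix.det_transpose]
    rw [Finset.prod_pow_eq_pow_sum, Finset.prod_pow_eq_pow_sum]
    rfl
  -- assemble
  have hsplit : ∀ b : Fin m, (n + b.1 - conjP l b) + conjP l b = n + b.1 := by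
    intro b
    have := conjP_le l b
    omega
  have h5 : (∑ b : Fin m, (n + b.1 - conjP l b)) + ∑ b : Fin m, conjP l b =
      ∑ b : Fin m, (n + b.1) := by
    rw [← Finset.sum_add_distrib]
    exact Finset.sum_congr rfl fun b _ => hsplit b
  have h6 : (∑ i, l i) + ((∑ a : Fin m, (n + a.1)) + ∑ b : Fin m, (n + b.1 - conjP l b)) =
      2 * ∑ a : Fin m, (n + a.1) := by
    have h7 := sum_conjP l hm
    omega
  calc omegaHom (SchurDet n l) = P.toBlocks₁₁.det := hLHS
    _ = P.det * Q.toBlocks₂₂.det := hJac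
    _ = (-1 : Lam) ^ (∑ i, l i) *
        ((-1 : Lam) ^ (∑ a : Fin m, (n + a.1)) *
          ((-1 : Lam) ^ (∑ b : Fin m, (n + b.1 - conjP l b)) * SchurDet m l')) := by
        rw [hdetP, hdetQ]
    _ = (-1 : Lam) ^ ((∑ i, l i) +
          ((∑ a : Fin m, (n + a.1)) + ∑ b : Fin m, (n + b.1 - conjP l b))) * SchurDet m l' := by
        rw [← mul_assoc, ← pow_add, ← mul_assoc, ← pow_add, add_assoc]
    _ = SchurDet m l' := by
        rw [h6, pow_mul, neg_one_sq, one_pow, one_mul]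
end
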